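/- Let (A, μ, α, B) be a quadratic Hom-Novikov superalgebra with α an automorphism, and let [x,y] = xy − (−1)^{|x||y|}yx be the sub-adjacent bracket. Then every bracket [x,y] lies in the center Z(A) = {a ∈ A : ab = ba = 0 for all b ∈ A}; consequently the sub-adjacent Hom-Lie superalgebra is 2-step nilpotent: [[x,y],[z,w]] = 0 and more generally [A,[A,A]] = 0. -/

import Mathlib

/-- The sub-adjacent super-commutator bracket `[x,y] = xy - (-1)^(|x||y|) yx`
for homogeneous `x` of degree `i` and `y` of degree `j`. -/
def sbr {𝕜 A : Type*} [Field 𝕜] [AddCommGroup A] [Module 𝕜 A]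
    (mul : A →ₗ[𝕜] A →ₗ[𝕜] A) (i j : ZMod 2) (x y : A) : A :=
  mul x y - ((-1 : 𝕜) ^ (i.val * j.val)) • mul y x

lemma neg_one_pow_congr' {𝕜 : Type*} [Field 𝕜] {m n : ℕ}
    (h : (m : ZMod 2) = (n : ZMod 2)) : ((-1:𝕜)^m = (-1)^n) := by
  have h2 : m % 2 = n % 2 := (ZMod.natCast_eq_natCast_iff m n 2).mp h
  rw [neg_one_pow_eq_pow_mod_two, h2, ← neg_one_pow_eq_pow_mod_two]

lemma sign_aux (i j k l : ZMod 2) :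
    ((i.val * ((j+k)+l).val + (k.val*l.val + (j+l).val*(k+i).val) : ℕ) : ZMod 2)
      = ((i.val*j.val + (j.val * ((i+k)+l).val
          + (k.val*l.val + ((i+l).val*(k+j).val + j.val*i.val))) : ℕ) : ZMod 2) := by
  revert i j k l; decide

theorem stmt11
    (𝕜 A : Type*) [Field 𝕜] [AddCommGroup A] [Module 𝕜 A]
    (G : ZMod 2 → Submodule 𝕜 A) (hG : DirectSum.IsInternal G)
    (mul : A →ₗ[𝕜] A →ₗ[𝕜] A) (α : A →ₗ[𝕜] A)
    (hmul_even : ∀ i j : ZMod 2, ∀ x ∈ G i, ∀ y ∈ G j, mul x y ∈ G (i + j))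
    (hα_even : ∀ i : ZMod 2, ∀ x ∈ G i, α x ∈ G i)
    (hα_mul : ∀ x y : A, α (mul x y) = mul (α x) (α y))
    (hls : ∀ i j k : ZMod 2, ∀ x ∈ G i, ∀ y ∈ G j, ∀ z ∈ G k,
      mul (mul x y) (α z) - mul (α x) (mul y z)
        = ((-1 : 𝕜) ^ (i.val * j.val)) • (mul (mul y x) (α z) - mul (α y) (mul x z)))
    (hrn : ∀ i j k : ZMod 2, ∀ x ∈ G i, ∀ y ∈ G j, ∀ z ∈ G k,
      mul (mul x y) (α z) = ((-1 : 𝕜) ^ (j.val * k.val)) • mul (mul x z) (α y))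
    (B : A →ₗ[𝕜] A →ₗ[𝕜] 𝕜)
    (hB_even : ∀ i j : ZMod 2, i ≠ j → ∀ x ∈ G i, ∀ y ∈ G j, B x y = 0)
    (hB_sym : ∀ i j : ZMod 2, ∀ x ∈ G i, ∀ y ∈ G j,
      B x y = ((-1 : 𝕜) ^ (i.val * j.val)) * B y x)
    (hB_nd : ∀ x : A, (∀ y : A, B x y = 0) → x = 0)
    (hB_inv : ∀ x y z : A, B (α x) (mul y z) = B (mul x y) (α z))
    (hα_bij : Function.Bijective α) :
    (∀ i j : ZMod 2, ∀ x ∈ G i, ∀ y ∈ G j, ∀ b : A,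
      mul (sbr mul i j x y) b = 0 ∧ mul b (sbr mul i j x y) = 0) ∧
    (∀ i j k l : ZMod 2, ∀ x ∈ G i, ∀ y ∈ G j, ∀ z ∈ G k, ∀ w ∈ G l,
      sbr mul (i + j) (k + l) (sbr mul i j x y) (sbr mul k l z w) = 0) ∧
    (∀ i j k : ZMod 2, ∀ a ∈ G i, ∀ x ∈ G j, ∀ y ∈ G k,
      sbr mul i (j + k) a (sbr mul j k x y) = 0) := by
  obtain ⟨αinj, αsurj⟩ := hα_bij
  have h01 : ∀ i : ZMod 2, i = 0 ∨ i = 1 := by decide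
  -- every element decomposes into homogeneous pieces
  have hdecomp : ∀ a : A, ∃ a0, a0 ∈ G 0 ∧ ∃ a1, a1 ∈ G 1 ∧ a = a0 + a1 := by
    intro a
    have htop : iSup G = ⊤ := hG.submodule_iSup_eq_top
    have hle : (⊤ : Submodule 𝕜 A) ≤ G 0 ⊔ G 1 := by
      rw [← htop]
      refine iSup_le fun i => ?_
      rcases h01 i with h | h <;> rw [h]
      · exact le_sup_left
      · exact le_sup_right
    rcases Submodule.mem_sup.mp (hle (Submodule.mem_top (x := a))) with ⟨a0, h0, a1, h1, hsum⟩
    exact ⟨a0, h0, a1, h1, hsum.symm⟩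
  -- the "exchange" identity  B(α(xy), α(zw)) = (-1)^{jk} B(α(xz), α(yw))
  have hK : ∀ (i j k l : ZMod 2), ∀ x ∈ G i, ∀ y ∈ G j, ∀ z ∈ G k, ∀ w ∈ G l,
      B (α (mul x y)) (α (mul z w))
        = (-1:𝕜)^(j.val*k.val) * B (α (mul x z)) (α (mul y w)) := by
    intro i j k l x hx y hy z hz w hw
    calc B (α (mul x y)) (α (mul z w))
        = B (α (mul x y)) (mul (α z) (α w)) := by rw [hα_mul z w]
      _ = B (mul (mul x y) (α z)) (α (α w)) := hB_inv _ _ _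
      _ = B (((-1:𝕜)^(j.val*k.val)) • mul (mul x z) (α y)) (α (α w)) := by
            rw [hrn i j k x hx y hy z hz]
      _ = (-1:𝕜)^(j.val*k.val) * B (mul (mul x z) (α y)) (α (α w)) := by
            rw [map_smul, LinearMap.smul_apply, smul_eq_mul]
      _ = (-1:𝕜)^(j.val*k.val) * B (α (mul x z)) (mul (α y) (α w)) := by
            rw [hB_inv]
      _ = (-1:𝕜)^(j.val*k.val) * B (α (mul x z)) (α (mul y w)) := by rw [hα_mul y w]
  -- the key middle identity
  have hmid : ∀ (i j k l : ZMod 2), ∀ x ∈ G i, ∀ y ∈ G j, ∀ z ∈ G k, ∀ w ∈ G l,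
      B (mul (α x) (mul y z)) (α (α w))
        = (-1:𝕜)^(i.val*j.val) * B (mul (α y) (mul x z)) (α (α w)) := by
    intro i j k l x hx y hy z hz w hw
    have hL : B (mul (α x) (mul y z)) (α (α w))
        = (-1:𝕜) ^ (i.val * ((j+k)+l).val + (k.val*l.val + (j+l).val*(k+i).val))
            * B (α (mul z x)) (α (mul y w)) := by
      calc B (mul (α x) (mul y z)) (α (α w))
          = B (α (α x)) (mul (mul y z) (α w)) := (hB_inv (α x) (mul y z) (α w)).symm
        _ = (-1:𝕜)^(i.val * ((j+k)+l).val) * B (mul (mul y z) (α w)) (α (α x)) :=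
              hB_sym i ((j+k)+l) (α (α x)) (hα_even i _ (hα_even i x hx)) _
                (hmul_even (j+k) l _ (hmul_even j k y hy z hz) _ (hα_even l w hw))
        _ = (-1:𝕜)^(i.val * ((j+k)+l).val) * B (α (mul y z)) (α (mul w x)) := by
              rw [← hB_inv (mul y z) (α w) (α x), ← hα_mul w x]
        _ = (-1:𝕜)^(i.val * ((j+k)+l).val)
              * ((-1:𝕜)^(k.val*l.val) * B (α (mul y w)) (α (mul z x))) := by
              rw [hK j k l i y hy z hz w hw x hx]
        _ = (-1:𝕜)^(i.val * ((j+k)+l).val) * ((-1:𝕜)^(k.val*l.val)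
              * ((-1:𝕜)^((j+l).val*(k+i).val) * B (α (mul z x)) (α (mul y w)))) := by
              rw [← hB_sym (j+l) (k+i) (α (mul y w))
                (hα_even _ _ (hmul_even j l y hy w hw)) (α (mul z x))
                (hα_even _ _ (hmul_even k i z hz x hx))]
        _ = (-1:𝕜) ^ (i.val * ((j+k)+l).val + (k.val*l.val + (j+l).val*(k+i).val))
              * B (α (mul z x)) (α (mul y w)) := by
              rw [pow_add, pow_add]; ring
    have hR : B (mul (α y) (mul x z)) (α (α w))
        = (-1:𝕜) ^ (j.val * ((i+k)+l).val
            + (k.val*l.val + ((i+l).val*(k+j).val + j.val*i.val)))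
            * B (α (mul z x)) (α (mul y w)) := by
      calc B (mul (α y) (mul x z)) (α (α w))
          = B (α (α y)) (mul (mul x z) (α w)) := (hB_inv (α y) (mul x z) (α w)).symm
        _ = (-1:𝕜)^(j.val * ((i+k)+l).val) * B (mul (mul x z) (α w)) (α (α y)) :=
              hB_sym j ((i+k)+l) (α (α y)) (hα_even j _ (hα_even j y hy)) _
                (hmul_even (i+k) l _ (hmul_even i k x hx z hz) _ (hα_even l w hw))
        _ = (-1:𝕜)^(j.val * ((i+k)+l).val) * B (α (mul x z)) (α (mul w y)) := by
              rw [← hB_inv (mul x z) (α w) (α y), ← hα_mul w y]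
        _ = (-1:𝕜)^(j.val * ((i+k)+l).val)
              * ((-1:𝕜)^(k.val*l.val) * B (α (mul x w)) (α (mul z y))) := by
              rw [hK i k l j x hx z hz w hw y hy]
        _ = (-1:𝕜)^(j.val * ((i+k)+l).val) * ((-1:𝕜)^(k.val*l.val)
              * ((-1:𝕜)^((i+l).val*(k+j).val) * B (α (mul z y)) (α (mul x w)))) := by
              rw [← hB_sym (i+l) (k+j) (α (mul x w))
                (hα_even _ _ (hmul_even i l x hx w hw)) (α (mul z y))
                (hα_even _ _ (hmul_even k j z hz y hy))]
        _ = (-1:𝕜)^(j.val * ((i+k)+l).val) * ((-1:𝕜)^(k.val*l.val)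
              * ((-1:𝕜)^((i+l).val*(k+j).val)
                * ((-1:𝕜)^(j.val*i.val) * B (α (mul z x)) (α (mul y w))))) := by
              rw [hK k j i l z hz y hy x hx w hw]
        _ = (-1:𝕜) ^ (j.val * ((i+k)+l).val
              + (k.val*l.val + ((i+l).val*(k+j).val + j.val*i.val)))
              * B (α (mul z x)) (α (mul y w)) := by
              rw [pow_add, pow_add, pow_add]; ring
    rw [hL, hR, ← mul_assoc, ← pow_add, neg_one_pow_congr' (sign_aux i j k l)]
  -- the C-version of the key lemma: B(α([x,y]), α(zw)) = 0
  have hCKL : ∀ (i j k l : ZMod 2), ∀ x ∈ G i, ∀ y ∈ G j, ∀ z ∈ G k, ∀ w ∈ G l,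
      B (α (mul x y)) (α (mul z w))
        = (-1:𝕜)^(i.val*j.val) * B (α (mul y x)) (α (mul z w)) := by
    intro i j k l x hx y hy z hz w hw
    have hE := congrArg (fun u => B u (α (α w))) (hls i j k x hx y hy z hz)
    simp only [map_sub, map_smul, LinearMap.sub_apply, LinearMap.smul_apply,
      smul_eq_mul] at hE
    have e1 : B (mul (mul x y) (α z)) (α (α w)) = B (α (mul x y)) (α (mul z w)) := by
      rw [← hB_inv (mul x y) (α z) (α w), hα_mul z w]
    have e2 : B (mul (mul y x) (α z)) (α (α w)) = B (α (mul y x)) (α (mul z w)) := by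
      rw [← hB_inv (mul y x) (α z) (α w), hα_mul z w]
    have hm := hmid i j k l x hx y hy z hz w hw
    rw [← e1, ← e2]
    linear_combination hE + hm
  -- centrality of brackets of homogeneous elements
  have hcent : ∀ (i j : ZMod 2), ∀ x ∈ G i, ∀ y ∈ G j, ∀ b : A,
      mul (sbr mul i j x y) b = 0 ∧ mul b (sbr mul i j x y) = 0 := by
    intro i j x hx y hy
    have base : ∀ (k l : ZMod 2), ∀ z ∈ G k, ∀ w ∈ G l,
        B (α (sbr mul i j x y)) (mul (α z) (α w)) = 0 := by
      intro k l z hz w hw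
      rw [← hα_mul z w]
      show B (α (mul x y - ((-1:𝕜)^(i.val*j.val)) • mul y x)) (α (mul z w)) = 0
      simp only [map_sub, map_smul, LinearMap.sub_apply, LinearMap.smul_apply,
        smul_eq_mul]
      rw [hCKL i j k l x hx y hy z hz w hw]
      ring
    have key : ∀ u v : A, B (α (sbr mul i j x y)) (mul u v) = 0 := by
      intro u v
      obtain ⟨u₂, rfl⟩ := αsurj u
      obtain ⟨v₂, rfl⟩ := αsurj v
      obtain ⟨u0, hu0, u1, hu1, rfl⟩ := hdecomp u₂
      obtain ⟨v0, hv0, v1, hv1, rfl⟩ := hdecomp v₂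
      simp only [map_add, LinearMap.add_apply]
      rw [base 0 0 u0 hu0 v0 hv0, base 0 1 u0 hu0 v1 hv1,
          base 1 0 u1 hu1 v0 hv0, base 1 1 u1 hu1 v1 hv1]
      ring
    have h1 : ∀ b : A, mul (sbr mul i j x y) b = 0 := by
      intro b
      apply hB_nd
      intro c
      obtain ⟨c', rfl⟩ := αsurj c
      rw [← hB_inv]
      exact key b c'
    refine fun b => ⟨h1 b, ?_⟩
    apply hB_nd
    intro c
    obtain ⟨c', rfl⟩ := αsurj c
    rw [← hB_inv, h1 c']
    simp
  refine ⟨hcent, ?_, ?_⟩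
  · intro i j k l x hx y hy z hz w hw
    show mul (sbr mul i j x y) (sbr mul k l z w)
        - ((-1:𝕜) ^ ((i+j).val * (k+l).val)) • mul (sbr mul k l z w) (sbr mul i j x y) = 0
    rw [(hcent i j x hx y hy (sbr mul k l z w)).1,
        (hcent i j x hx y hy (sbr mul k l z w)).2]
    simp
  · intro i j k a ha x hx y hy
    show mul a (sbr mul j k x y)
        - ((-1:𝕜) ^ (i.val * (j+k).val)) • mul (sbr mul j k x y) a = 0
    rw [(hcent j k x hx y hy a).2, (hcent j k x hx y hy a).1]
    simp
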